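/- Let 𝒢 = 𝒢(G,H,S) be a strongly connected Cayley coset digraph with S nonempty whose generators are distinct double-coset representatives. Then the edge connectivity of 𝒢 equals its degree: λ(𝒢) = d = Σ_{s∈S} |HsH/H|. -/

import Mathlib

open Classical

/-- A digraph (given by its edge relation `E`) is strongly connected iff for every
ordered pair of vertices there is a directed path from the first to the second. -/
def SC {V : Type*} (E : V → V → Prop) : Prop :=
  ∀ a b : V, Relation.ReflTransGen E a b

/-- The subdigraph induced on `A` is strongly connected. -/
def SCOn {V : Type*} (E : V → V → Prop) (A : Set V) : Prop :=
  ∀ a ∈ A, ∀ b ∈ A, Relation.ReflTransGen (fun x y => x ∈ A ∧ y ∈ A ∧ E x y) a b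

/-- Out-neighborhood of a set of vertices. -/
def Nout {V : Type*} (E : V → V → Prop) (A : Set V) : Set V :=
  {x | x ∉ A ∧ ∃ y ∈ A, E y x}

/-- Vertex connectivity: the least cardinality of a set `T` of vertices whose removal
leaves a non-strongly-connected digraph; `Nat.card V - 1` if no such `T` exists. -/
noncomputable def kappa {V : Type*} [Finite V] (E : V → V → Prop) : ℕ :=
  if ∃ T : Set V, ¬ SCOn E Tᶜ then
    sInf {m | ∃ T : Set V, T.ncard = m ∧ ¬ SCOn E Tᶜ}
  else Nat.card V - 1

/-- A part of a digraph. -/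
def IsPart {V : Type*} (E : V → V → Prop) (A : Set V) : Prop :=
  A.Nonempty ∧ ((A ∪ Nout E A)ᶜ : Set V).Nonempty

/-- An atom: a part with `|N(A)| = κ` of minimum cardinality among such parts. -/
def IsAtomD {V : Type*} [Finite V] (E : V → V → Prop) (A : Set V) : Prop :=
  IsPart E A ∧ (Nout E A).ncard = kappa E ∧
    ∀ B : Set V, IsPart E B → (Nout E B).ncard = kappa E → A.ncard ≤ B.ncard
/-- The double coset `K s K`. -/
def dcoset {G : Type*} [Group G] (K : Subgroup G) (s : G) : Set G :=
  {g | ∃ h₁ ∈ K, ∃ h₂ ∈ K, g = h₁ * s * h₂}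

/-- Edge relation of the Cayley coset digraph `𝒢(G,H,S)` on the left cosets `G ⧸ H`:
there is an edge from `g₁H` to `g₂H` iff `g₁⁻¹g₂ ∈ HsH` for some `s ∈ S`
(equivalently, `g₁Hs ∩ g₂H ≠ ∅`). -/
def cayleyRel {G : Type*} [Group G] (H : Subgroup G) (S : Set G) :
    G ⧸ H → G ⧸ H → Prop :=
  fun x y => ∃ s ∈ S, ∃ g₁ g₂ : G, (g₁ : G ⧸ H) = x ∧ (g₂ : G ⧸ H) = y ∧
    g₁⁻¹ * g₂ ∈ dcoset H s

/-- `d_s = |HsH/H|`, the number of left cosets of `H` contained in `HsH`. -/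
noncomputable def dval {G : Type*} [Group G] (H : Subgroup G) (s : G) : ℕ :=
  ((QuotientGroup.mk '' dcoset H s : Set (G ⧸ H))).ncard

/-- The set of edges leaving `A`. -/
def NeEdges {V : Type*} (E : V → V → Prop) (A : Set V) : Set (V × V) :=
  {p | E p.1 p.2 ∧ p.1 ∈ A ∧ p.2 ∉ A}

/-- Edge connectivity: the least cardinality of a set `F` of edges whose removal
leaves a non-strongly-connected digraph. -/
noncomputable def lambdaE {V : Type*} [Finite V] (E : V → V → Prop) : ℕ :=
  sInf {m | ∃ F : Set (V × V), (∀ p ∈ F, E p.1 p.2) ∧ F.ncard = m ∧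
    ¬ SC (fun x y => E x y ∧ (x, y) ∉ F)}

section Alg
variable {G : Type*} [Group G] {H : Subgroup G}

lemma mem_dcoset_self (s : G) : s ∈ dcoset H s :=
  ⟨1, H.one_mem, 1, H.one_mem, by group⟩

lemma dcoset_mul_left {s g h : G} (hh : h ∈ H) (hg : g ∈ dcoset H s) :
    h * g ∈ dcoset H s := by
  obtain ⟨h₁, hh₁, h₂, hh₂, rfl⟩ := hg
  exact ⟨h * h₁, H.mul_mem hh hh₁, h₂, hh₂, by group⟩

lemma dcoset_mul_right {s g h : G} (hh : h ∈ H) (hg : g ∈ dcoset H s) :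
    g * h ∈ dcoset H s := by
  obtain ⟨h₁, hh₁, h₂, hh₂, rfl⟩ := hg
  exact ⟨h₁, hh₁, h₂ * h, H.mul_mem hh₂ hh, by group⟩

lemma dcoset_eq_of_mem {s g : G} (hg : g ∈ dcoset H s) : dcoset H g = dcoset H s := by
  obtain ⟨h₁, hh₁, h₂, hh₂, rfl⟩ := hg
  ext x
  constructor
  · rintro ⟨a, ha, b, hb, rfl⟩
    exact ⟨a * h₁, H.mul_mem ha hh₁, h₂ * b, H.mul_mem hh₂ hb, by group⟩
  · rintro ⟨a, ha, b, hb, rfl⟩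
    exact ⟨a * h₁⁻¹, H.mul_mem ha (H.inv_mem hh₁), h₂⁻¹ * b, H.mul_mem (H.inv_mem hh₂) hb,
      by group⟩

lemma dcoset_inv {s g : G} (hg : g ∈ dcoset H s) : g⁻¹ ∈ dcoset H s⁻¹ := by
  obtain ⟨h₁, hh₁, h₂, hh₂, rfl⟩ := hg
  exact ⟨h₂⁻¹, H.inv_mem hh₂, h₁⁻¹, H.inv_mem hh₁, by group⟩

lemma dcoset_inv_set (s : G) : dcoset H s⁻¹ = (·⁻¹) '' dcoset H s := by
  ext x
  constructor
  · intro hx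
    exact ⟨x⁻¹, by simpa using dcoset_inv hx, inv_inv x⟩
  · rintro ⟨y, hy, rfl⟩
    exact dcoset_inv hy

lemma dcoset_inv_ne {s t : G} (h : dcoset H s ≠ dcoset H t) : dcoset H s⁻¹ ≠ dcoset H t⁻¹ := by
  intro he
  apply h
  have : s⁻¹ ∈ dcoset H t⁻¹ := he ▸ mem_dcoset_self s⁻¹
  have : s ∈ dcoset H t := by simpa using dcoset_inv this
  exact dcoset_eq_of_mem this

lemma one_mem_dcoset_iff {s : G} : (1 : G) ∈ dcoset H s ↔ s ∈ H := by
  constructor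
  · rintro ⟨h₁, hh₁, h₂, hh₂, he⟩
    have : s = h₁⁻¹ * h₂⁻¹ := by
      have h2 : h₁⁻¹ * (h₁ * s * h₂) * h₂⁻¹ = s := by group
      rw [← h2, he.symm]
      group
    rw [this]; exact H.mul_mem (H.inv_mem hh₁) (H.inv_mem hh₂)
  · intro hs
    exact ⟨1, H.one_mem, s⁻¹, H.inv_mem hs, by group⟩

lemma mem_H_dcoset {s g : G} (hg : g ∈ dcoset H s) (hgH : g ∈ H) : s ∈ H := by
  have : (1 : G) ∈ dcoset H s := by
    have := dcoset_mul_left (H.inv_mem hgH) hg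
    simpa using this
  exact one_mem_dcoset_iff.mp this

/-- Normalized form of the Cayley relation. -/
lemma cayleyRel_iff (S : Set G) (a b : G) :
    cayleyRel H S (a : G ⧸ H) (b : G ⧸ H) ↔ ∃ s ∈ S, a⁻¹ * b ∈ dcoset H s := by
  constructor
  · rintro ⟨s, hs, g₁, g₂, h1, h2, hm⟩
    refine ⟨s, hs, ?_⟩
    have k1 : g₁⁻¹ * a ∈ H := QuotientGroup.eq.mp h1
    have k2 : b⁻¹ * g₂ ∈ H := QuotientGroup.eq.mp h2.symm
    have : (g₁⁻¹ * a)⁻¹ * (g₁⁻¹ * g₂) * (b⁻¹ * g₂)⁻¹ = a⁻¹ * b := by group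
    rw [← this]
    exact dcoset_mul_right (H.inv_mem k2) (dcoset_mul_left (H.inv_mem k1) hm)
  · rintro ⟨s, hs, hm⟩
    exact ⟨s, hs, a, b, rfl, rfl, hm⟩

lemma cayleyRel_smul (S : Set G) (g : G) (x y : G ⧸ H) :
    cayleyRel H S (g • x) (g • y) ↔ cayleyRel H S x y := by
  obtain ⟨a, rfl⟩ := QuotientGroup.mk_surjective x
  obtain ⟨b, rfl⟩ := QuotientGroup.mk_surjective y
  have hx : g • ((a : G ⧸ H)) = ((g * a : G) : G ⧸ H) := rfl
  have hy : g • ((b : G ⧸ H)) = ((g * b : G) : G ⧸ H) := rfl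
  rw [hx, hy, cayleyRel_iff, cayleyRel_iff]
  simp only [mul_inv_rev]
  constructor <;> (rintro ⟨s, hs, hm⟩; refine ⟨s, hs, ?_⟩)
  · have : a⁻¹ * g⁻¹ * (g * b) = a⁻¹ * b := by group
    rwa [this] at hm
  · have : a⁻¹ * g⁻¹ * (g * b) = a⁻¹ * b := by group
    rwa [this]

lemma cayleyRel_irrefl {S : Set G} (hSH : ∀ s ∈ S, s ∉ H) (x : G ⧸ H) :
    ¬ cayleyRel H S x x := by
  obtain ⟨a, rfl⟩ := QuotientGroup.mk_surjective x
  rw [cayleyRel_iff]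
  rintro ⟨s, hs, hm⟩
  simp only [inv_mul_cancel] at hm
  exact hSH s hs (one_mem_dcoset_iff.mp hm)

end Alg

section Count
set_option linter.unusedSectionVars false
attribute [local instance] Fintype.ofFinite
variable {V W : Type*} [Finite V] [Finite W]

lemma my_ncard_biUnion {ι : Type*} (t : Finset ι) (f : ι → Set V)
    (hdisj : ∀ i ∈ t, ∀ j ∈ t, i ≠ j → f i ∩ f j = ∅) :
    (⋃ i ∈ t, f i).ncard = ∑ i ∈ t, (f i).ncard := by
  induction t using Finset.induction with
  | empty => simp
  | @insert a t ha ih =>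
    rw [Finset.sum_insert ha, Finset.set_biUnion_insert]
    rw [Set.ncard_union_eq ?hd (Set.toFinite _) (Set.toFinite _)]
    · rw [ih (fun i hi j hj hij => hdisj i (Finset.mem_insert_of_mem hi)
        j (Finset.mem_insert_of_mem hj) hij)]
    case hd =>
      rw [Set.disjoint_iff_inter_eq_empty]
      apply Set.eq_empty_iff_forall_notMem.mpr
      rintro x ⟨hxa, hx⟩
      simp only [Set.mem_iUnion] at hx
      obtain ⟨i, hi, hx⟩ := hx
      have hx : x ∈ f a ∩ f i := ⟨hxa, hx⟩
      have : f a ∩ f i = ∅ := hdisj a (Finset.mem_insert_self a t)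
        i (Finset.mem_insert_of_mem hi) (fun h => ha (h ▸ hi))
      rw [this] at hx
      exact hx

lemma ncard_eq_sum_fibers (s : Set V) (f : V → W) (t : Finset W) (ht : ∀ x ∈ s, f x ∈ t) :
    s.ncard = ∑ b ∈ t, (s ∩ f ⁻¹' {b}).ncard := by
  classical
  rw [Set.ncard_eq_toFinset_card' s]
  rw [Finset.card_eq_sum_card_fiberwise (f := f) (t := t)
    (fun x hx => ht x (Set.mem_toFinset.mp hx))]
  apply Finset.sum_congr rfl
  intro b _
  rw [Set.ncard_eq_toFinset_card' (s ∩ f ⁻¹' {b})]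
  congr 1
  ext x
  simp

/-- Counting pairs with first coordinate in `A`, fiberwise. -/
lemma card_pairs_fst (P : V → V → Prop) (A : Set V) :
    {p : V × V | P p.1 p.2 ∧ p.1 ∈ A}.ncard
      = ∑ v ∈ (Set.toFinite A).toFinset, ({y | P v y}).ncard := by
  rw [ncard_eq_sum_fibers {p : V × V | P p.1 p.2 ∧ p.1 ∈ A} Prod.fst (Set.toFinite A).toFinset
    (fun p hp => (Set.toFinite A).mem_toFinset.mpr hp.2)]
  · apply Finset.sum_congr rfl
    intro v hv
    have hvA : v ∈ A := (Set.toFinite A).mem_toFinset.mp hv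
    have : {p : V × V | P p.1 p.2 ∧ p.1 ∈ A} ∩ Prod.fst ⁻¹' {v}
        = (fun y => (v, y)) '' {y | P v y} := by
      ext ⟨x, y⟩
      simp only [Set.mem_inter_iff, Set.mem_setOf_eq, Set.mem_preimage,
        Set.mem_singleton_iff, Set.mem_image]
      constructor
      · rintro ⟨⟨h1, _⟩, rfl⟩
        exact ⟨y, h1, rfl⟩
      · rintro ⟨z, hz, he⟩
        obtain ⟨rfl, rfl⟩ := Prod.mk.injEq .. ▸ he
        simp only [Prod.mk.injEq] at he
        exact ⟨⟨hz, hvA⟩, rfl⟩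
    rw [this, Set.ncard_image_of_injective _ (fun a b h => by simpa using h)]

lemma card_pairs_snd (P : V → V → Prop) (A : Set V) :
    {p : V × V | P p.1 p.2 ∧ p.2 ∈ A}.ncard
      = ∑ v ∈ (Set.toFinite A).toFinset, ({y | P y v}).ncard := by
  have : {p : V × V | P p.1 p.2 ∧ p.2 ∈ A}
      = (fun p : V × V => (p.2, p.1)) '' {p : V × V | P p.2 p.1 ∧ p.1 ∈ A} := by
    ext ⟨x, y⟩
    simp only [Set.mem_setOf_eq, Set.mem_image, Prod.exists]
    constructor
    · rintro ⟨h1, h2⟩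
      exact ⟨y, x, ⟨h1, h2⟩, rfl⟩
    · rintro ⟨a, b, ⟨h1, h2⟩, he⟩
      simp only [Prod.mk.injEq] at he
      obtain ⟨rfl, rfl⟩ := he
      exact ⟨h1, h2⟩
  rw [this, Set.ncard_image_of_injective _ (fun a b h => by
    simpa [Prod.ext_iff, and_comm] using h)]
  exact card_pairs_fst (fun a b => P b a) A

end Count

section Reg
set_option linter.unusedSectionVars false
attribute [local instance] Fintype.ofFinite
variable {G : Type*} [Group G] [Finite G] {H : Subgroup G}

lemma dcoset_ncard (s : G) : (dcoset H s).ncard = dval H s * (H : Set G).ncard := by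
  rw [ncard_eq_sum_fibers (dcoset H s) (QuotientGroup.mk : G → G ⧸ H)
    ((QuotientGroup.mk '' dcoset H s : Set (G ⧸ H))).toFinset
    (fun x hx => Set.mem_toFinset.mpr ⟨x, hx, rfl⟩)]
  rw [dval, Set.ncard_eq_toFinset_card' (QuotientGroup.mk '' dcoset H s : Set (G ⧸ H))]
  rw [Finset.sum_congr rfl (g := fun _ => (H : Set G).ncard) ?he, Finset.sum_const,
      smul_eq_mul, Set.ncard_eq_toFinset_card']
  case he =>
      intro c hc
      obtain ⟨g, hg, rfl⟩ := Set.mem_toFinset.mp hc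
      have : dcoset H s ∩ QuotientGroup.mk ⁻¹' {(g : G ⧸ H)} = (fun h => g * h) '' (H : Set G) := by
        ext x
        simp only [Set.mem_inter_iff, Set.mem_preimage, Set.mem_singleton_iff, Set.mem_image,
          SetLike.mem_coe]
        constructor
        · rintro ⟨hx, he⟩
          refine ⟨g⁻¹ * x, QuotientGroup.eq.mp he.symm, by group⟩
        · rintro ⟨h, hh, rfl⟩
          exact ⟨dcoset_mul_right hh hg, (QuotientGroup.eq.mpr (by simpa using hh)).symm⟩
      rw [this, Set.ncard_image_of_injective _ (mul_right_injective g)]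

lemma H_ncard_pos : 0 < (H : Set G).ncard :=
  (Set.ncard_pos (Set.toFinite _)).mpr ⟨1, H.one_mem⟩

lemma dval_pos (s : G) : 0 < dval H s :=
  (Set.ncard_pos (Set.toFinite _)).mpr ⟨QuotientGroup.mk s, s, mem_dcoset_self s, rfl⟩

lemma dval_inv (s : G) : dval H s⁻¹ = dval H s := by
  have h1 : (dcoset H s⁻¹).ncard = (dcoset H s).ncard := by
    rw [dcoset_inv_set, Set.ncard_image_of_injective _ inv_injective]
  rw [dcoset_ncard, dcoset_ncard] at h1
  exact Nat.eq_of_mul_eq_mul_right H_ncard_pos h1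

variable {S : Finset G}

lemma outSet_eq (a : G) :
    {y : G ⧸ H | cayleyRel H (S : Set G) (a : G ⧸ H) y}
      = ⋃ s ∈ S, (a • ·) '' (QuotientGroup.mk '' dcoset H s) := by
  ext y
  obtain ⟨b, rfl⟩ := QuotientGroup.mk_surjective y
  simp only [Set.mem_setOf_eq, Set.mem_iUnion, Set.mem_image, cayleyRel_iff]
  constructor
  · rintro ⟨s, hs, hm⟩
    refine ⟨s, hs, QuotientGroup.mk (a⁻¹ * b), ⟨a⁻¹ * b, hm, rfl⟩, ?_⟩
    show ((a * (a⁻¹ * b) : G) : G ⧸ H) = _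
    congr 1
    group
  · rintro ⟨s, hs, _, ⟨c, hc, rfl⟩, he⟩
    refine ⟨s, hs, ?_⟩
    have : ((a * c : G) : G ⧸ H) = (b : G ⧸ H) := he
    have hH : (a * c)⁻¹ * b ∈ H := QuotientGroup.eq.mp this
    have : a⁻¹ * b = c * ((a * c)⁻¹ * b) := by group
    rw [this]
    exact dcoset_mul_right hH hc

lemma inSet_eq (a : G) :
    {y : G ⧸ H | cayleyRel H (S : Set G) y (a : G ⧸ H)}
      = ⋃ s ∈ S, (a • ·) '' (QuotientGroup.mk '' dcoset H s⁻¹) := by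
  ext y
  obtain ⟨b, rfl⟩ := QuotientGroup.mk_surjective y
  simp only [Set.mem_setOf_eq, Set.mem_iUnion, Set.mem_image, cayleyRel_iff]
  constructor
  · rintro ⟨s, hs, hm⟩
    have hm' : a⁻¹ * b ∈ dcoset H s⁻¹ := by
      have := dcoset_inv hm
      simpa using this
    refine ⟨s, hs, QuotientGroup.mk (a⁻¹ * b), ⟨a⁻¹ * b, hm', rfl⟩, ?_⟩
    show ((a * (a⁻¹ * b) : G) : G ⧸ H) = _
    congr 1
    group
  · rintro ⟨s, hs, _, ⟨c, hc, rfl⟩, he⟩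
    refine ⟨s, hs, ?_⟩
    have : ((a * c : G) : G ⧸ H) = (b : G ⧸ H) := he
    have hH : (a * c)⁻¹ * b ∈ H := QuotientGroup.eq.mp this
    have hb : a⁻¹ * b ∈ dcoset H s⁻¹ := by
      have : a⁻¹ * b = c * ((a * c)⁻¹ * b) := by group
      rw [this]
      exact dcoset_mul_right hH hc
    have := dcoset_inv hb
    simpa using this

lemma image_mk_dcoset_disjoint (hdc : ∀ s ∈ S, ∀ t ∈ S, s ≠ t → dcoset H s ≠ dcoset H t)
    (a : G) {s t : G} (hs : s ∈ S) (ht : t ∈ S) (hst : s ≠ t) :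
    ((a • ·) '' (QuotientGroup.mk '' dcoset H s : Set (G ⧸ H)))
      ∩ ((a • ·) '' (QuotientGroup.mk '' dcoset H t : Set (G ⧸ H))) = ∅ := by
  apply Set.eq_empty_iff_forall_notMem.mpr
  rintro x ⟨⟨_, ⟨c, hc, rfl⟩, he1⟩, ⟨_, ⟨c', hc', rfl⟩, he2⟩⟩
  have : ((c : G ⧸ H)) = (c' : G ⧸ H) := MulAction.injective a (he1.trans he2.symm)
  have hH : c⁻¹ * c' ∈ H := QuotientGroup.eq.mp this
  have : c' ∈ dcoset H s := by
    have : c' = c * (c⁻¹ * c') := by group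
    rw [this]
    exact dcoset_mul_right hH hc
  exact hdc s hs t ht hst ((dcoset_eq_of_mem this).symm.trans (dcoset_eq_of_mem hc'))

lemma outdeg_eq (hdc : ∀ s ∈ S, ∀ t ∈ S, s ≠ t → dcoset H s ≠ dcoset H t) (x : G ⧸ H) :
    {y : G ⧸ H | cayleyRel H (S : Set G) x y}.ncard = ∑ s ∈ S, dval H s := by
  obtain ⟨a, rfl⟩ := QuotientGroup.mk_surjective x
  rw [outSet_eq, my_ncard_biUnion S _ (fun s hs t ht hst =>
    image_mk_dcoset_disjoint hdc a hs ht hst)]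
  apply Finset.sum_congr rfl
  intro s _
  rw [Set.ncard_image_of_injective _ (MulAction.injective a)]
  rfl

lemma indeg_eq (hdc : ∀ s ∈ S, ∀ t ∈ S, s ≠ t → dcoset H s ≠ dcoset H t) (x : G ⧸ H) :
    {y : G ⧸ H | cayleyRel H (S : Set G) y x}.ncard = ∑ s ∈ S, dval H s := by
  obtain ⟨a, rfl⟩ := QuotientGroup.mk_surjective x
  have hdc' : ∀ s ∈ S, ∀ t ∈ S, s ≠ t → dcoset H s⁻¹ ≠ dcoset H t⁻¹ :=
    fun s hs t ht hst => dcoset_inv_ne (hdc s hs t ht hst)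
  rw [inSet_eq]
  have hd : ∀ s ∈ S, ∀ t ∈ S, s ≠ t →
      ((a • ·) '' (QuotientGroup.mk '' dcoset H s⁻¹ : Set (G ⧸ H)))
        ∩ ((a • ·) '' (QuotientGroup.mk '' dcoset H t⁻¹ : Set (G ⧸ H))) = ∅ := by
    intro s hs t ht hst
    apply Set.eq_empty_iff_forall_notMem.mpr
    rintro x ⟨⟨_, ⟨c, hc, rfl⟩, he1⟩, ⟨_, ⟨c', hc', rfl⟩, he2⟩⟩
    have : ((c : G ⧸ H)) = (c' : G ⧸ H) := MulAction.injective a (he1.trans he2.symm)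
    have hH : c⁻¹ * c' ∈ H := QuotientGroup.eq.mp this
    have : c' ∈ dcoset H s⁻¹ := by
      have : c' = c * (c⁻¹ * c') := by group
      rw [this]
      exact dcoset_mul_right hH hc
    exact hdc' s hs t ht hst ((dcoset_eq_of_mem this).symm.trans (dcoset_eq_of_mem hc'))
  rw [my_ncard_biUnion S _ hd]
  apply Finset.sum_congr rfl
  intro s _
  rw [Set.ncard_image_of_injective _ (MulAction.injective a), ← dval_inv s]
  rfl

end Reg

section Graph
set_option linter.unusedSectionVars false
attribute [local instance] Fintype.ofFinite
variable {V : Type*} [Finite V] {E : V → V → Prop}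

lemma exists_crossing {A : Set V} {a b : V} (ha : a ∈ A)
    (h : Relation.ReflTransGen E a b) (hb : b ∉ A) :
    ∃ x ∈ A, ∃ y, y ∉ A ∧ E x y := by
  revert hb
  induction h with
  | refl => exact fun hb => absurd ha hb
  | @tail c d hac hcd ih =>
    intro hd
    by_cases hc : c ∈ A
    · exact ⟨c, hc, d, hd, hcd⟩
    · exact ih hc

lemma notSC_remove {A : Set V} (hA : A.Nonempty) (hA' : Aᶜ.Nonempty) :
    ¬ SC (fun x y => E x y ∧ (x, y) ∉ NeEdges E A) := by
  intro h
  obtain ⟨a, ha⟩ := hA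
  obtain ⟨b, hb⟩ := hA'
  obtain ⟨x, hx, y, hy, hxy, hnF⟩ := exists_crossing ha (h a b) hb
  exact hnF ⟨hxy, hx, hy⟩

lemma lambdaE_le_bnd {A : Set V} (hA : A.Nonempty) (hA' : Aᶜ.Nonempty) :
    lambdaE E ≤ (NeEdges E A).ncard :=
  Nat.sInf_le ⟨NeEdges E A, fun _ hp => hp.1, rfl, notSC_remove hA hA'⟩

lemma frag_of_notSC {F : Set (V × V)} (hF : ¬ SC (fun x y => E x y ∧ (x, y) ∉ F)) :
    ∃ A : Set V, A.Nonempty ∧ Aᶜ.Nonempty ∧ NeEdges E A ⊆ F := by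
  rw [SC] at hF
  push_neg at hF
  obtain ⟨a, b, hab⟩ := hF
  refine ⟨{x | Relation.ReflTransGen (fun x y => E x y ∧ (x, y) ∉ F) a x},
    ⟨a, Relation.ReflTransGen.refl⟩, ⟨b, hab⟩, ?_⟩
  rintro ⟨x, y⟩ ⟨hxy, hx, hy⟩
  by_contra hnF
  exact hy (Relation.ReflTransGen.tail hx ⟨hxy, hnF⟩)

lemma bnd_pos (hconn : SC E) {A : Set V} (hA : A.Nonempty) (hA' : Aᶜ.Nonempty) :
    0 < (NeEdges E A).ncard := by
  obtain ⟨a, ha⟩ := hA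
  obtain ⟨b, hb⟩ := hA'
  obtain ⟨x, hx, y, hy, hxy⟩ := exists_crossing ha (hconn a b) hb
  exact (Set.ncard_pos (Set.toFinite _)).mpr ⟨(x, y), hxy, hx, hy⟩

lemma neEdges_ncard_eq_sum (A : Set V) :
    (NeEdges E A).ncard = ∑ v ∈ (Set.toFinite A).toFinset, ({y | E v y ∧ y ∉ A}).ncard := by
  have h : NeEdges E A = {p : V × V | (E p.1 p.2 ∧ p.2 ∉ A) ∧ p.1 ∈ A} := by
    ext ⟨x, y⟩
    simp only [NeEdges, Set.mem_setOf_eq]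
    tauto
  rw [h, card_pairs_fst (fun a b => E a b ∧ b ∉ A) A]

lemma bnd_balance {d : ℕ} (hout : ∀ v : V, {y | E v y}.ncard = d)
    (hin : ∀ v : V, {y | E y v}.ncard = d) (A : Set V) :
    (NeEdges E A).ncard = (NeEdges E Aᶜ).ncard := by
  have hT : {p : V × V | E p.1 p.2 ∧ p.1 ∈ A}.ncard = ∑ v ∈ (Set.toFinite A).toFinset, d := by
    rw [card_pairs_fst E A]
    exact Finset.sum_congr rfl (fun v _ => hout v)
  have hHd : {p : V × V | E p.1 p.2 ∧ p.2 ∈ A}.ncard = ∑ v ∈ (Set.toFinite A).toFinset, d := by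
    rw [card_pairs_snd E A]
    exact Finset.sum_congr rfl (fun v _ => hin v)
  have split1 : {p : V × V | E p.1 p.2 ∧ p.1 ∈ A}
      = NeEdges E A ∪ {p : V × V | E p.1 p.2 ∧ p.1 ∈ A ∧ p.2 ∈ A} := by
    ext ⟨x, y⟩
    simp only [NeEdges, Set.mem_setOf_eq, Set.mem_union]
    tauto
  have split2 : {p : V × V | E p.1 p.2 ∧ p.2 ∈ A}
      = NeEdges E Aᶜ ∪ {p : V × V | E p.1 p.2 ∧ p.1 ∈ A ∧ p.2 ∈ A} := by
    ext ⟨x, y⟩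
    simp only [NeEdges, Set.mem_setOf_eq, Set.mem_union, Set.mem_compl_iff, not_not]
    tauto
  have d1 : Disjoint (NeEdges E A) {p : V × V | E p.1 p.2 ∧ p.1 ∈ A ∧ p.2 ∈ A} := by
    rw [Set.disjoint_iff_inter_eq_empty]
    apply Set.eq_empty_iff_forall_notMem.mpr
    rintro ⟨x, y⟩ ⟨⟨_, _, h2⟩, ⟨_, _, h4⟩⟩
    exact h2 h4
  have d2 : Disjoint (NeEdges E Aᶜ) {p : V × V | E p.1 p.2 ∧ p.1 ∈ A ∧ p.2 ∈ A} := by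
    rw [Set.disjoint_iff_inter_eq_empty]
    apply Set.eq_empty_iff_forall_notMem.mpr
    rintro ⟨x, y⟩ ⟨⟨_, h1, _⟩, ⟨_, h3, _⟩⟩
    exact h1 h3
  have t1 : {p : V × V | E p.1 p.2 ∧ p.1 ∈ A}.ncard
      = (NeEdges E A).ncard + {p : V × V | E p.1 p.2 ∧ p.1 ∈ A ∧ p.2 ∈ A}.ncard := by
    rw [split1, Set.ncard_union_eq d1 (Set.toFinite _) (Set.toFinite _)]
  have t2 : {p : V × V | E p.1 p.2 ∧ p.2 ∈ A}.ncard
      = (NeEdges E Aᶜ).ncard + {p : V × V | E p.1 p.2 ∧ p.1 ∈ A ∧ p.2 ∈ A}.ncard := by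
    rw [split2, Set.ncard_union_eq d2 (Set.toFinite _) (Set.toFinite _)]
  omega

lemma bnd_submod (A B : Set V) :
    (NeEdges E (A ∩ B)).ncard + (NeEdges E (A ∪ B)).ncard
      ≤ (NeEdges E A).ncard + (NeEdges E B).ncard := by
  have h1 : NeEdges E (A ∩ B) ∪ NeEdges E (A ∪ B) ⊆ NeEdges E A ∪ NeEdges E B := by
    rintro ⟨x, y⟩ hp
    simp only [NeEdges, Set.mem_union, Set.mem_setOf_eq, Set.mem_inter_iff] at hp ⊢
    tauto
  have h2 : NeEdges E (A ∩ B) ∩ NeEdges E (A ∪ B) ⊆ NeEdges E A ∩ NeEdges E B := by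
    rintro ⟨x, y⟩ hp
    simp only [NeEdges, Set.mem_inter_iff, Set.mem_setOf_eq, Set.mem_union] at hp ⊢
    tauto
  calc (NeEdges E (A ∩ B)).ncard + (NeEdges E (A ∪ B)).ncard
      = (NeEdges E (A ∩ B) ∪ NeEdges E (A ∪ B)).ncard
        + (NeEdges E (A ∩ B) ∩ NeEdges E (A ∪ B)).ncard :=
        (Set.ncard_union_add_ncard_inter _ _ (Set.toFinite _) (Set.toFinite _)).symm
    _ ≤ (NeEdges E A ∪ NeEdges E B).ncard + (NeEdges E A ∩ NeEdges E B).ncard :=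
        Nat.add_le_add (Set.ncard_le_ncard h1 (Set.toFinite _))
          (Set.ncard_le_ncard h2 (Set.toFinite _))
    _ = (NeEdges E A).ncard + (NeEdges E B).ncard :=
        Set.ncard_union_add_ncard_inter _ _ (Set.toFinite _) (Set.toFinite _)

lemma eout_lower (hloop : ∀ v : V, ¬ E v v) {d : ℕ} (hout : ∀ v : V, {y | E v y}.ncard = d)
    {A : Set V} {v : V} (hv : v ∈ A) :
    d ≤ {y | E v y ∧ y ∉ A}.ncard + (A.ncard - 1) := by
  have hsplit : {y | E v y} = {y | E v y ∧ y ∉ A} ∪ {y | E v y ∧ y ∈ A} := by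
    ext y; simp only [Set.mem_setOf_eq, Set.mem_union]; tauto
  have hsub : {y | E v y ∧ y ∈ A} ⊆ A \ {v} := by
    rintro y ⟨h1, h2⟩
    refine ⟨h2, ?_⟩
    rintro rfl
    exact hloop y h1
  have h2 : {y | E v y ∧ y ∈ A}.ncard ≤ A.ncard - 1 := by
    have := Set.ncard_le_ncard hsub (Set.toFinite _)
    rwa [Set.ncard_diff_singleton_of_mem hv] at this
  calc d = {y | E v y}.ncard := (hout v).symm
    _ ≤ {y | E v y ∧ y ∉ A}.ncard + {y | E v y ∧ y ∈ A}.ncard := by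
        rw [hsplit]; exact Set.ncard_union_le _ _
    _ ≤ {y | E v y ∧ y ∉ A}.ncard + (A.ncard - 1) := Nat.add_le_add_left h2 _

lemma mader_arith {d k t : ℕ} (h1 : 1 ≤ t) (h3 : 1 ≤ k) (h2 : d ≤ t + (k - 1)) :
    d ≤ k * t := by
  obtain ⟨k', rfl⟩ : ∃ k', k = k' + 1 := ⟨k - 1, by omega⟩
  have hk : k' ≤ k' * t := Nat.le_mul_of_pos_right k' h1
  have : (k' + 1) * t = k' * t + t := by ring
  omega

/-- The block lemma: two minimum-size minimum-cut fragments that intersect are equal. -/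
lemma block_lemma {lam k : ℕ}
    (hbal : ∀ A : Set V, (NeEdges E A).ncard = (NeEdges E Aᶜ).ncard)
    (hlow : ∀ A : Set V, A.Nonempty → Aᶜ.Nonempty → lam ≤ (NeEdges E A).ncard)
    (hmin : ∀ A : Set V, A.Nonempty → Aᶜ.Nonempty → (NeEdges E A).ncard = lam → k ≤ A.ncard)
    {A B : Set V}
    (hA1 : A.Nonempty) (hA2 : Aᶜ.Nonempty) (hA3 : (NeEdges E A).ncard = lam)
    (hA4 : A.ncard = k)
    (hB1 : B.Nonempty) (hB2 : Bᶜ.Nonempty) (hB3 : (NeEdges E B).ncard = lam)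
    (hB4 : B.ncard = k)
    (hAB : (A ∩ B).Nonempty) : A = B := by
  by_cases hU : (A ∪ B)ᶜ.Nonempty
  · -- A ∪ B proper
    have hABc : (A ∩ B)ᶜ.Nonempty := ⟨hA2.choose, fun h => hA2.choose_spec h.1⟩
    have l1 : lam ≤ (NeEdges E (A ∩ B)).ncard := hlow _ hAB hABc
    have l2 : lam ≤ (NeEdges E (A ∪ B)).ncard :=
      hlow _ ⟨hA1.choose, Or.inl hA1.choose_spec⟩ hU
    have hsub := bnd_submod A B (E := E)
    have e1 : (NeEdges E (A ∩ B)).ncard = lam := by omega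
    have hk : k ≤ (A ∩ B).ncard := hmin _ hAB hABc e1
    have hIA : A ∩ B = A := by
      apply Set.eq_of_subset_of_ncard_le Set.inter_subset_left _ (Set.toFinite _)
      omega
    have hIB : A ∩ B = B := by
      apply Set.eq_of_subset_of_ncard_le Set.inter_subset_right _ (Set.toFinite _)
      omega
    rw [← hIA, hIB]
  · -- A ∪ B = univ
    by_cases hABss : A ⊆ B
    · exact Set.eq_of_subset_of_ncard_le hABss (by omega) (Set.toFinite _)
    exfalso
    have hADB : (A ∩ Bᶜ).Nonempty := by
      obtain ⟨x, hx⟩ := Set.not_subset.mp hABss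
      exact ⟨x, hx.1, hx.2⟩
    have hBc3 : (NeEdges E Bᶜ).ncard = lam := (hbal B) ▸ hB3
    -- complement of A ∪ Bᶜ contains B ∩ Aᶜ ⊇ Aᶜ (as A ∪ B = univ means Aᶜ ⊆ B)
    have hAcB : Aᶜ ⊆ B := by
      intro x hx
      have hxAB : x ∈ A ∪ B := by
        by_contra hc
        exact hU ⟨x, hc⟩
      rcases hxAB with h | h
      · exact absurd h hx
      · exact h
    have hUc : (A ∪ Bᶜ)ᶜ.Nonempty := by
      obtain ⟨x, hx⟩ := hA2
      exact ⟨x, fun h => h.elim (fun h1 => hx h1) (fun h2 => h2 (hAcB hx))⟩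
    have l1 : lam ≤ (NeEdges E (A ∩ Bᶜ)).ncard :=
      hlow _ hADB ⟨hA2.choose, fun h => hA2.choose_spec h.1⟩
    have l2 : lam ≤ (NeEdges E (A ∪ Bᶜ)).ncard :=
      hlow _ ⟨hA1.choose, Or.inl hA1.choose_spec⟩ hUc
    have hsub := bnd_submod A Bᶜ (E := E)
    have e1 : (NeEdges E (A ∩ Bᶜ)).ncard = lam := by omega
    have hk : k ≤ (A ∩ Bᶜ).ncard :=
      hmin _ hADB ⟨hA2.choose, fun h => hA2.choose_spec h.1⟩ e1
    have hlt : (A ∩ Bᶜ).ncard < A.ncard := by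
      apply Set.ncard_lt_ncard _ (Set.toFinite _)
      constructor
      · exact Set.inter_subset_left
      · intro hAsub
        obtain ⟨x, hx1, hx2⟩ := hAB
        exact (hAsub hx1).2 hx2
    omega

end Graph

section Cayley
set_option linter.unusedSectionVars false
attribute [local instance] Fintype.ofFinite
variable {G : Type*} [Group G] [Finite G] {H : Subgroup G} {S : Finset G}

lemma neEdges_smul (g : G) (A : Set (G ⧸ H)) :
    NeEdges (cayleyRel H (S : Set G)) ((g • ·) '' A)
      = (Prod.map (g • · : G ⧸ H → G ⧸ H) (g • ·)) '' NeEdges (cayleyRel H (S : Set G)) A := by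
  ext ⟨x, y⟩
  constructor
  · rintro ⟨hxy, ⟨x', hx', rfl⟩, hy⟩
    refine ⟨(x', g⁻¹ • y), ⟨?_, hx', ?_⟩, ?_⟩
    · have : cayleyRel H (S : Set G) (g • x') (g • (g⁻¹ • y)) ↔
          cayleyRel H (S : Set G) x' (g⁻¹ • y) := cayleyRel_smul _ g _ _
      rw [← this, smul_inv_smul]
      exact hxy
    · intro hmem
      exact hy ⟨g⁻¹ • y, hmem, smul_inv_smul g y⟩
    · show (g • x', g • (g⁻¹ • y)) = (g • x', y)
      rw [smul_inv_smul]
  · rintro ⟨⟨x', y'⟩, ⟨hxy, hx', hy'⟩, he⟩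
    obtain ⟨rfl, rfl⟩ : x = g • x' ∧ y = g • y' := by
      simpa [Prod.ext_iff, eq_comm] using he
    refine ⟨(cayleyRel_smul _ g _ _).mpr hxy, ⟨x', hx', rfl⟩, ?_⟩
    rintro ⟨x'', hx'', hex⟩
    have : x'' = y' := MulAction.injective g hex
    exact hy' (this ▸ hx'')

lemma bnd_smul (g : G) (A : Set (G ⧸ H)) :
    (NeEdges (cayleyRel H (S : Set G)) ((g • ·) '' A)).ncard
      = (NeEdges (cayleyRel H (S : Set G)) A).ncard := by
  rw [neEdges_smul g A]
  apply Set.ncard_image_of_injective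
  intro p q h
  have h1 := congrArg Prod.fst h
  have h2 := congrArg Prod.snd h
  simp only [Prod.map_fst, Prod.map_snd] at h1 h2
  exact Prod.ext (MulAction.injective g h1) (MulAction.injective g h2)

theorem mader_main {G : Type*} [Group G] [Finite G] (H : Subgroup G) (S : Finset G)
    (hne : S.Nonempty)
    (hSH : ∀ s ∈ S, s ∉ H)
    (hdc : ∀ s ∈ S, ∀ t ∈ S, s ≠ t → dcoset H s ≠ dcoset H t)
    (hconn : SC (cayleyRel H (S : Set G)))
    {A : Set (G ⧸ H)} (hA1 : A.Nonempty) (hA2 : Aᶜ.Nonempty) :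
    ∑ s ∈ S, dval H s ≤ (NeEdges (cayleyRel H (S : Set G)) A).ncard := by
  set E := cayleyRel H (S : Set G) with hE
  set d := ∑ s ∈ S, dval H s with hd
  by_contra hcon
  push_neg at hcon
  -- minimum cut value
  set lamSet := {m | ∃ B : Set (G ⧸ H), B.Nonempty ∧ Bᶜ.Nonempty ∧ (NeEdges E B).ncard = m}
    with hlamSet
  have hlamne : lamSet.Nonempty := ⟨_, A, hA1, hA2, rfl⟩
  set lam := sInf lamSet with hlam
  obtain ⟨A₁, hA₁1, hA₁2, hA₁3⟩ := Nat.sInf_mem hlamne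
  have hlow : ∀ B : Set (G ⧸ H), B.Nonempty → Bᶜ.Nonempty → lam ≤ (NeEdges E B).ncard :=
    fun B h1 h2 => Nat.sInf_le ⟨B, h1, h2, rfl⟩
  have hlamlt : lam < d := lt_of_le_of_lt (hlow A hA1 hA2) hcon
  have hlampos : 0 < lam := by
    rw [hlam, ← hA₁3]
    exact bnd_pos hconn hA₁1 hA₁2
  -- atom
  set kSet := {m | ∃ B : Set (G ⧸ H), B.Nonempty ∧ Bᶜ.Nonempty ∧ (NeEdges E B).ncard = lam
    ∧ B.ncard = m} with hkSet
  have hkne : kSet.Nonempty := ⟨_, A₁, hA₁1, hA₁2, hA₁3, rfl⟩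
  set k := sInf kSet with hk
  obtain ⟨B, hB1, hB2, hB3, hB4⟩ := Nat.sInf_mem hkne
  have hmin : ∀ C : Set (G ⧸ H), C.Nonempty → Cᶜ.Nonempty → (NeEdges E C).ncard = lam
      → k ≤ C.ncard := fun C h1 h2 h3 => Nat.sInf_le ⟨C, h1, h2, h3, rfl⟩
  have hkpos : 0 < k := by
    rw [hk, ← hB4]
    exact (Set.ncard_pos (Set.toFinite _)).mpr hB1
  -- regularity
  have hout : ∀ v : G ⧸ H, {y | E v y}.ncard = d := fun v => outdeg_eq hdc v
  have hin : ∀ v : G ⧸ H, {y | E y v}.ncard = d := fun v => indeg_eq hdc v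
  have hloop : ∀ v : G ⧸ H, ¬ E v v := fun v => cayleyRel_irrefl hSH v
  have hbal : ∀ C : Set (G ⧸ H), (NeEdges E C).ncard = (NeEdges E Cᶜ).ncard :=
    bnd_balance hout hin
  -- block property
  have hblock : ∀ g : G, (((g • ·) '' B) ∩ B).Nonempty → (g • ·) '' B = B := by
    intro g hg
    apply block_lemma hbal hlow hmin _ _ _ _ hB1 hB2 hB3 hB4 hg
    · exact hB1.image _
    · rw [← Set.image_compl_eq (MulAction.bijective g)]
      exact hB2.image _
    · exact (bnd_smul g B).trans hB3
    · exact (Set.ncard_image_of_injective B (MulAction.injective g)).trans hB4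
  -- boundary out-degree is constant on B
  have hconst : ∀ v ∈ B, ∀ w ∈ B,
      {y | E v y ∧ y ∉ B}.ncard = {y | E w y ∧ y ∉ B}.ncard := by
    intro v hv w hw
    obtain ⟨a, rfl⟩ := QuotientGroup.mk_surjective v
    obtain ⟨b, rfl⟩ := QuotientGroup.mk_surjective w
    set g := b * a⁻¹ with hgdef
    have hgv : g • ((a : G ⧸ H)) = (b : G ⧸ H) := by
      show ((g * a : G) : G ⧸ H) = (b : G ⧸ H)
      congr 1
      simp only [hgdef]
      group
    have hgB : (g • ·) '' B = B := by
      apply hblock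
      exact ⟨(b : G ⧸ H), ⟨(a : G ⧸ H), hv, hgv⟩, hw⟩
    have hset : {y | E (b : G ⧸ H) y ∧ y ∉ B} = (g • ·) '' {y | E (a : G ⧸ H) y ∧ y ∉ B} := by
      ext y
      simp only [Set.mem_setOf_eq, Set.mem_image]
      constructor
      · rintro ⟨hy1, hy2⟩
        refine ⟨g⁻¹ • y, ⟨?_, ?_⟩, smul_inv_smul g y⟩
        · have : E (g • (a : G ⧸ H)) (g • (g⁻¹ • y)) ↔ E (a : G ⧸ H) (g⁻¹ • y) :=
            cayleyRel_smul _ g _ _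
          rw [← this, smul_inv_smul, hgv]
          exact hy1
        · intro hmem
          exact hy2 (hgB ▸ ⟨g⁻¹ • y, hmem, smul_inv_smul g y⟩)
      · rintro ⟨z, ⟨hz1, hz2⟩, rfl⟩
        constructor
        · rw [← hgv]
          exact (cayleyRel_smul _ g _ _).mpr hz1
        · intro hmem
          exact hz2 (by
            have : g • z ∈ (g • ·) '' B := hgB.symm ▸ hmem
            obtain ⟨z', hz', he⟩ := this
            exact (MulAction.injective g he : z' = z) ▸ hz')
    rw [hset, Set.ncard_image_of_injective _ (MulAction.injective g)]
  -- conclude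
  obtain ⟨v₁, hv₁⟩ := hB1
  set t := {y | E v₁ y ∧ y ∉ B}.ncard with ht
  have hsum : (NeEdges E B).ncard = k * t := by
    rw [neEdges_ncard_eq_sum]
    refine Eq.trans (Finset.sum_congr rfl
      (fun v hv => hconst v ((Set.toFinite B).mem_toFinset.mp hv) v₁ hv₁)) ?_
    rw [Finset.sum_const, smul_eq_mul]
    exact congrArg (· * t) ((Set.ncard_eq_toFinset_card B (Set.toFinite B)).symm.trans hB4)
  have hlamkt : lam = k * t := hB3 ▸ hsum
  have htpos : 1 ≤ t := by
    rcases Nat.eq_zero_or_pos t with h | h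
    · rw [h, Nat.mul_zero] at hlamkt
      omega
    · exact h
  have hlowdeg : d ≤ t + (k - 1) := by
    have := eout_lower hloop hout hv₁
    rwa [hB4] at this
  have : d ≤ k * t := mader_arith htpos hkpos hlowdeg
  omega

end Cayley


/-- Mader's theorem: a strongly connected Cayley coset digraph has edge
connectivity equal to its degree `d = Σ_{s∈S} |HsH/H|`. -/
theorem stmt_19 {G : Type*} [Group G] [Finite G] (H : Subgroup G) (S : Finset G)
    (hne : S.Nonempty)
    (hSH : ∀ s ∈ S, s ∉ H)
    (hdc : ∀ s ∈ S, ∀ t ∈ S, s ≠ t → dcoset H s ≠ dcoset H t)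
    (hconn : SC (cayleyRel H (S : Set G))) :
    lambdaE (cayleyRel H (S : Set G)) = ∑ s ∈ S, dval H s := by
  set E := cayleyRel H (S : Set G) with hE
  set d := ∑ s ∈ S, dval H s with hd
  obtain ⟨s₀, hs₀⟩ := hne
  have hloop : ∀ v : G ⧸ H, ¬ E v v := fun v => cayleyRel_irrefl hSH v
  set v₀ : G ⧸ H := ((1 : G) : G ⧸ H) with hv₀
  set w₀ : G ⧸ H := ((s₀ : G) : G ⧸ H) with hw₀
  have hvw : v₀ ≠ w₀ := by
    intro h
    have h2 : (1 : G)⁻¹ * s₀ ∈ H := QuotientGroup.eq.mp h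
    rw [inv_one, one_mul] at h2
    exact hSH s₀ hs₀ h2
  have hcompl : (({v₀} : Set (G ⧸ H))ᶜ).Nonempty := ⟨w₀, fun h => hvw (h.symm)⟩
  have hsingle : (NeEdges E ({v₀} : Set (G ⧸ H))).ncard = d := by
    have hset : NeEdges E ({v₀} : Set (G ⧸ H)) = (fun y => (v₀, y)) '' {y | E v₀ y} := by
      ext ⟨x, y⟩
      simp only [NeEdges, Set.mem_setOf_eq, Set.mem_singleton_iff, Set.mem_image,
        Prod.mk.injEq]
      constructor
      · rintro ⟨h1, rfl, h3⟩
        exact ⟨y, h1, rfl, rfl⟩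
      · rintro ⟨z, hz, rfl, rfl⟩
        refine ⟨hz, rfl, ?_⟩
        rintro rfl
        exact hloop v₀ hz
    rw [hset, Set.ncard_image_of_injective _ (fun a b h => by simpa using h)]
    exact outdeg_eq hdc v₀
  have hmemd : d ∈ {m | ∃ F : Set ((G ⧸ H) × (G ⧸ H)), (∀ p ∈ F, E p.1 p.2) ∧ F.ncard = m ∧
      ¬ SC (fun x y => E x y ∧ (x, y) ∉ F)} :=
    ⟨NeEdges E ({v₀} : Set (G ⧸ H)), fun _ hp => hp.1, hsingle,
      notSC_remove ⟨v₀, rfl⟩ hcompl⟩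
  apply le_antisymm
  · exact Nat.sInf_le hmemd
  · obtain ⟨F₀, hF₀, hc, hnsc⟩ := Nat.sInf_mem (⟨d, hmemd⟩ : Set.Nonempty _)
    obtain ⟨A, hA1, hA2, hsub⟩ := frag_of_notSC hnsc
    calc d ≤ (NeEdges E A).ncard := mader_main H S ⟨s₀, hs₀⟩ hSH hdc hconn hA1 hA2
      _ ≤ F₀.ncard := Set.ncard_le_ncard hsub (Set.toFinite _)
      _ = lambdaE E := hc
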